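/- For a ∈ ℝ^L, max{a^T ζ : ‖ζ‖_∞ ≤ 1, ‖ζ‖_1 ≤ Γ} = ∑_{ℓ=1}^{⌊Γ⌋} |a|_{(ℓ)} + (Γ - ⌊Γ⌋)|a|_{(⌊Γ⌋+1)}, where |a|_{(1)} ≥ |a|_{(2)} ≥ … are the absolute values of the entries of a sorted in decreasing order (with the convention that terms with index > L are zero). -/

import Mathlib

lemma sum_coef (L k : ℕ) (hk : k ≤ L) (b : ℕ → ℝ) (hb0 : ∀ n, L ≤ n → b n = 0) (f : ℝ) :
    ∑ i : Fin L, (if (i : ℕ) < k then (1:ℝ) else if (i : ℕ) = k then f else 0) * b i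
      = ∑ n ∈ Finset.range k, b n + f * b k := by
  rw [Fin.sum_univ_eq_sum_range (fun n => (if n < k then (1:ℝ) else if n = k then f else 0) * b n)]
  rcases eq_or_lt_of_le hk with h | h
  · subst h
    rw [hb0 k le_rfl, mul_zero, add_zero]
    apply Finset.sum_congr rfl
    intro n hn
    simp [Finset.mem_range.mp hn]
  · have : Finset.range L = Finset.range (k+1) ∪ Finset.Ico (k+1) L := by
      rw [Finset.range_eq_Ico, Finset.range_eq_Ico]
      exact (Finset.Ico_union_Ico_eq_Ico (a := 0) (b := k+1) (c := L) (by omega) (by omega)).symm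
    rw [this, Finset.sum_union (by simp [Finset.disjoint_left]; omega), Finset.sum_range_succ]
    have h1 : ∑ n ∈ Finset.range k, (if n < k then (1:ℝ) else if n = k then f else 0) * b n
        = ∑ n ∈ Finset.range k, b n := by
      apply Finset.sum_congr rfl; intro n hn; simp [Finset.mem_range.mp hn]
    have h2 : ∑ n ∈ Finset.Ico (k+1) L, (if n < k then (1:ℝ) else if n = k then f else 0) * b n = 0 := by
      apply Finset.sum_eq_zero; intro n hn
      have := Finset.mem_Ico.mp hn
      have h3 : ¬ n < k := by omega
      have h4 : n ≠ k := by omega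
      simp [h3, h4]
    rw [h1, h2, add_zero]
    simp

lemma sum_coef0 (L k : ℕ) (hk : k ≤ L) (c : ℕ → ℝ) :
    ∑ i : Fin L, (if (i : ℕ) < k then (1:ℝ) else 0) * c i = ∑ n ∈ Finset.range k, c n := by
  rw [Fin.sum_univ_eq_sum_range (fun n => (if n < k then (1:ℝ) else 0) * c n)]
  have : Finset.range L = Finset.range k ∪ Finset.Ico k L := by
    rw [Finset.range_eq_Ico, Finset.range_eq_Ico]
    exact (Finset.Ico_union_Ico_eq_Ico (a := 0) (b := k) (c := L) (by omega) (by omega)).symm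
  rw [this, Finset.sum_union (by simp [Finset.disjoint_left]; omega)]
  have h1 : ∑ n ∈ Finset.range k, (if n < k then (1:ℝ) else 0) * c n = ∑ n ∈ Finset.range k, c n := by
    apply Finset.sum_congr rfl; intro n hn; simp [Finset.mem_range.mp hn]
  have h2 : ∑ n ∈ Finset.Ico k L, (if n < k then (1:ℝ) else 0) * c n = 0 := by
    apply Finset.sum_eq_zero; intro n hn
    have := Finset.mem_Ico.mp hn
    simp [Nat.not_lt.mpr this.1]
  rw [h1, h2, add_zero]

lemma abs_sign_le_one (x : ℝ) : |(SignType.sign x : ℝ)| ≤ 1 := by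
  rcases lt_trichotomy x 0 with h | h | h <;> simp [h]

/-- Closed-form worst case over the Bertsimas–Sim budgeted uncertainty set:
if `σ` sorts the entries of `a` by decreasing absolute value, then the max of
`aᵀζ` over `{‖ζ‖_∞ ≤ 1, ‖ζ‖_1 ≤ Γ}` is the sum of the `⌊Γ⌋` largest `|a|`'s plus
`(Γ - ⌊Γ⌋)` times the next one (terms beyond `L` being zero). -/
theorem stmt_19 (L : ℕ) (a : Fin L → ℝ) (Γ : ℝ) (hΓ0 : 0 ≤ Γ) (hΓL : Γ ≤ L)
    (σ : Equiv.Perm (Fin L)) (hσ : ∀ i j : Fin L, i ≤ j → |a (σ j)| ≤ |a (σ i)|)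
    (b : ℕ → ℝ) (hb : ∀ n : ℕ, b n = if h : n < L then |a (σ ⟨n, h⟩)| else 0) :
    IsGreatest {x : ℝ | ∃ ζ : Fin L → ℝ,
        (∀ ℓ, |ζ ℓ| ≤ 1) ∧ (∑ ℓ, |ζ ℓ|) ≤ Γ ∧ x = ∑ ℓ, a ℓ * ζ ℓ}
      ((∑ n ∈ Finset.range ⌊Γ⌋₊, b n) + (Γ - ⌊Γ⌋₊) * b ⌊Γ⌋₊) := by
  set k := ⌊Γ⌋₊ with hkdef
  have hkΓ : (k : ℝ) ≤ Γ := Nat.floor_le hΓ0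
  have hΓk1 : Γ < k + 1 := Nat.lt_floor_add_one Γ
  have hkL : k ≤ L := by exact_mod_cast hkΓ.trans hΓL
  have hfrac0 : 0 ≤ Γ - k := by linarith
  have hfrac1 : Γ - k ≤ 1 := by linarith
  have hb0 : ∀ n, L ≤ n → b n = 0 := by
    intro n hn; rw [hb]; simp [Nat.not_lt.mpr hn]
  have hbnn : ∀ n, 0 ≤ b n := by
    intro n; rw [hb]; split <;> [exact abs_nonneg _; exact le_rfl]
  have hbmono : ∀ m n : ℕ, m ≤ n → b n ≤ b m := by
    intro m n hmn
    by_cases hn : n < L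
    · have hm : m < L := lt_of_le_of_lt hmn hn
      rw [hb n, hb m, dif_pos hn, dif_pos hm]
      exact hσ ⟨m, hm⟩ ⟨n, hn⟩ hmn
    · rw [hb n, dif_neg hn]; exact hbnn m
  have hbval : ∀ ℓ : Fin L, b ((σ.symm ℓ : ℕ)) = |a ℓ| := by
    intro ℓ
    rw [hb, dif_pos (σ.symm ℓ).isLt]
    congr 1
    have : (⟨((σ.symm ℓ : ℕ)), (σ.symm ℓ).isLt⟩ : Fin L) = σ.symm ℓ := rfl
    rw [this, Equiv.apply_symm_apply]
  constructor
  · -- membership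
    refine ⟨fun ℓ => (if ((σ.symm ℓ : ℕ)) < k then (1:ℝ) else if ((σ.symm ℓ : ℕ)) = k then Γ - k else 0)
        * (SignType.sign (a ℓ) : ℝ), ?_, ?_, ?_⟩
    · intro ℓ
      rw [abs_mul]
      calc |if ((σ.symm ℓ : ℕ)) < k then (1:ℝ) else if ((σ.symm ℓ : ℕ)) = k then Γ - k else 0|
            * |(SignType.sign (a ℓ) : ℝ)|
          ≤ 1 * 1 := by
            apply mul_le_mul _ (abs_sign_le_one _) (abs_nonneg _) zero_le_one
            split
            · simp
            · split
              · rw [abs_of_nonneg hfrac0]; exact hfrac1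
              · simp
        _ = 1 := one_mul 1
    · -- sum of abs ≤ Γ
      have key : ∀ ℓ : Fin L,
          |(if ((σ.symm ℓ : ℕ)) < k then (1:ℝ) else if ((σ.symm ℓ : ℕ)) = k then Γ - k else 0)
            * (SignType.sign (a ℓ) : ℝ)|
          ≤ (if ((σ.symm ℓ : ℕ)) < k then (1:ℝ) else if ((σ.symm ℓ : ℕ)) = k then Γ - k else 0) * 1 := by
        intro ℓ
        rw [abs_mul]
        have hc : |if ((σ.symm ℓ : ℕ)) < k then (1:ℝ) else if ((σ.symm ℓ : ℕ)) = k then Γ - k else 0|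
            = if ((σ.symm ℓ : ℕ)) < k then (1:ℝ) else if ((σ.symm ℓ : ℕ)) = k then Γ - k else 0 := by
          apply abs_of_nonneg
          split
          · exact zero_le_one
          · split
            · exact hfrac0
            · exact le_rfl
        rw [hc]
        apply mul_le_mul_of_nonneg_left (abs_sign_le_one _)
        split
        · exact zero_le_one
        · split
          · exact hfrac0
          · exact le_rfl
      calc ∑ ℓ, |(if ((σ.symm ℓ : ℕ)) < k then (1:ℝ) else if ((σ.symm ℓ : ℕ)) = k then Γ - k else 0)
              * (SignType.sign (a ℓ) : ℝ)|
          ≤ ∑ ℓ, (if ((σ.symm ℓ : ℕ)) < k then (1:ℝ) else if ((σ.symm ℓ : ℕ)) = k then Γ - k else 0) * 1 :=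
            Finset.sum_le_sum fun ℓ _ => key ℓ
        _ = ∑ i : Fin L, (if (i : ℕ) < k then (1:ℝ) else if (i : ℕ) = k then Γ - k else 0) * 1 :=
            Equiv.sum_comp σ.symm (fun i : Fin L => (if (i : ℕ) < k then (1:ℝ) else if (i : ℕ) = k then Γ - k else 0) * 1)
        _ = ∑ n ∈ Finset.range k, (fun n => if n < L then (1:ℝ) else 0) n
              + (Γ - k) * (fun n => if n < L then (1:ℝ) else 0) k := by
            rw [← sum_coef L k hkL (fun n => if n < L then (1:ℝ) else 0) (fun n hn => by simp [Nat.not_lt.mpr hn]) (Γ - k)]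
            apply Finset.sum_congr rfl
            intro i _
            simp [i.isLt]
        _ ≤ Γ := by
            have h1 : ∑ n ∈ Finset.range k, (fun n => if n < L then (1:ℝ) else 0) n = k := by
              rw [Finset.sum_congr rfl fun n hn => if_pos (lt_of_lt_of_le (Finset.mem_range.mp hn) hkL)]
              simp
            rw [h1]
            by_cases hkL' : k < L
            · simp only [if_pos hkL']; linarith
            · simp only [if_neg hkL']; linarith
    · -- value
      have : ∀ ℓ : Fin L, a ℓ * ((if ((σ.symm ℓ : ℕ)) < k then (1:ℝ) else if ((σ.symm ℓ : ℕ)) = k then Γ - k else 0)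
            * (SignType.sign (a ℓ) : ℝ))
          = (if ((σ.symm ℓ : ℕ)) < k then (1:ℝ) else if ((σ.symm ℓ : ℕ)) = k then Γ - k else 0) * b ((σ.symm ℓ : ℕ)) := by
        intro ℓ
        rw [hbval ℓ, ← self_mul_sign (a ℓ)]
        ring
      rw [Finset.sum_congr rfl fun ℓ _ => this ℓ]
      rw [show ∑ ℓ : Fin L, (if ((σ.symm ℓ : ℕ)) < k then (1:ℝ) else if ((σ.symm ℓ : ℕ)) = k then Γ - k else 0) * b ((σ.symm ℓ : ℕ))
          = ∑ i : Fin L, (if (i:ℕ) < k then (1:ℝ) else if (i:ℕ) = k then Γ - k else 0) * b (i:ℕ) from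
        Equiv.sum_comp σ.symm (fun i : Fin L => (if (i:ℕ) < k then (1:ℝ) else if (i:ℕ) = k then Γ - k else 0) * b (i:ℕ))]
      exact (sum_coef L k hkL b hb0 (Γ - k)).symm
  · -- upper bound
    rintro x ⟨ζ, hζ1, hζΓ, rfl⟩
    have step1 : ∑ ℓ, a ℓ * ζ ℓ ≤ ∑ ℓ, |a ℓ| * |ζ ℓ| := by
      apply Finset.sum_le_sum
      intro ℓ _
      rw [← abs_mul]
      exact le_abs_self _
    have step2 : ∑ ℓ, |a ℓ| * |ζ ℓ| = ∑ i : Fin L, b (i : ℕ) * |ζ (σ i)| := by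
      rw [show ∑ ℓ, |a ℓ| * |ζ ℓ| = ∑ ℓ : Fin L, b ((σ.symm ℓ : ℕ)) * |ζ ℓ| from
        Finset.sum_congr rfl fun ℓ _ => by rw [hbval ℓ]]
      rw [← Equiv.sum_comp σ (fun ℓ => b ((σ.symm ℓ : ℕ)) * |ζ ℓ|)]
      apply Finset.sum_congr rfl
      intro i _
      rw [Equiv.symm_apply_apply]
    have htΓ : ∑ i : Fin L, |ζ (σ i)| ≤ Γ := by
      rw [Equiv.sum_comp σ (fun ℓ => |ζ ℓ|)]
      exact hζΓ
    have step3 : ∑ i : Fin L, b (i : ℕ) * |ζ (σ i)|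
        = ∑ i : Fin L, (b (i : ℕ) - b k) * |ζ (σ i)| + b k * ∑ i : Fin L, |ζ (σ i)| := by
      rw [Finset.mul_sum, ← Finset.sum_add_distrib]
      apply Finset.sum_congr rfl
      intro i _
      ring
    have step4 : ∑ i : Fin L, (b (i : ℕ) - b k) * |ζ (σ i)|
        ≤ ∑ i : Fin L, (if (i : ℕ) < k then (1:ℝ) else 0) * (b (i:ℕ) - b k) := by
      apply Finset.sum_le_sum
      intro i _
      by_cases hik : (i : ℕ) < k
      · simp only [if_pos hik, one_mul]
        have hbk : 0 ≤ b (i:ℕ) - b k := sub_nonneg.mpr (hbmono _ _ hik.le)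
        calc (b (i : ℕ) - b k) * |ζ (σ i)| ≤ (b (i : ℕ) - b k) * 1 :=
              mul_le_mul_of_nonneg_left (hζ1 _) hbk
          _ = b (i:ℕ) - b k := mul_one _
      · simp only [if_neg hik, zero_mul]
        have hbk : b (i:ℕ) - b k ≤ 0 := sub_nonpos.mpr (hbmono _ _ (Nat.not_lt.mp hik))
        exact mul_nonpos_of_nonpos_of_nonneg hbk (abs_nonneg _)
    have step5 : ∑ i : Fin L, (if (i : ℕ) < k then (1:ℝ) else 0) * (b (i:ℕ) - b k)
        = ∑ n ∈ Finset.range k, b n - k * b k := by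
      rw [sum_coef0 L k hkL (fun n => b n - b k)]
      rw [Finset.sum_sub_distrib]
      simp [Finset.sum_const]
    have step6 : b k * ∑ i : Fin L, |ζ (σ i)| ≤ b k * Γ :=
      mul_le_mul_of_nonneg_left htΓ (hbnn k)
    calc ∑ ℓ, a ℓ * ζ ℓ ≤ ∑ i : Fin L, b (i : ℕ) * |ζ (σ i)| := by rw [← step2]; exact step1
      _ ≤ (∑ n ∈ Finset.range k, b n - k * b k) + b k * Γ := by
          rw [step3]; exact add_le_add (step4.trans (le_of_eq step5)) step6
      _ = (∑ n ∈ Finset.range k, b n) + (Γ - k) * b k := by ring
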